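/- Let Σ ∈ ℝ^{m×m} be symmetric positive definite, W₀, W* ∈ ℝ^{n×m}, α ≥ 0, M₁, M₂ ≥ 0, and assume α r √(m n M₁ M₂) < ‖W₀ − W*‖_F. Then for every A ∈ ℝ^{r×m} with ‖A‖_F² ≤ r m M₁ and every B ∈ ℝ^{n×r} with ‖B‖_F² ≤ r n M₂, Tr( (W₀ + αBA − W*) Σ (W₀ + αBA − W*)^⊤ ) ≥ λ_min(Σ) · ( ‖W₀ − W*‖_F − α r √(m n M₁ M₂) )² > 0. That is, the excess risk of the best LoRA-constrained linear predictor over the optimal linear predictor W* is strictly positive and bounded below by this quantity. -/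

import Mathlib

open Matrix

attribute [local instance] Matrix.frobeniusSeminormedAddCommGroup Matrix.frobeniusNormedSpace

private lemma frob_eq {p q : ℕ} (M : Matrix (Fin p) (Fin q) ℝ) :
    ‖M‖ = Real.sqrt (∑ i, ∑ j, (M i j) ^ 2) := by
  rw [Matrix.frobenius_norm_def, Real.sqrt_eq_rpow]
  congr 1
  simp [Real.rpow_two, Real.norm_eq_abs, sq_abs]

private lemma psd_trace_nonneg {k : ℕ} {M : Matrix (Fin k) (Fin k) ℝ} (h : M.PosSemidef) :
    0 ≤ M.trace := by
  rw [Matrix.trace]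
  refine Finset.sum_nonneg fun i _ => ?_
  have := h.dotProduct_mulVec_nonneg (Pi.single i 1)
  simpa [dotProduct, Matrix.mulVec, Pi.single_apply, Finset.mul_sum] using this

private lemma trace_mul_transpose_self' {p q : ℕ} (E : Matrix (Fin p) (Fin q) ℝ) :
    (E * Eᵀ).trace = ∑ i, ∑ j, (E i j) ^ 2 := by
  simp [Matrix.trace, Matrix.mul_apply, Matrix.diag, sq]

private lemma sub_smul_one_posSemidef {k : ℕ} (S : Matrix (Fin k) (Fin k) ℝ)
    (hS : S.IsHermitian) {lam : ℝ} (hlam : ∀ i, lam ≤ hS.eigenvalues i) :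
    (S - lam • 1).PosSemidef := by
  have key : S - lam • 1
      = (hS.eigenvectorUnitary : Matrix (Fin k) (Fin k) ℝ)
        * diagonal (fun i => hS.eigenvalues i - lam)
        * star (hS.eigenvectorUnitary : Matrix (Fin k) (Fin k) ℝ) := by
    have hdiag : diagonal (fun i => hS.eigenvalues i - lam)
        = diagonal (RCLike.ofReal ∘ hS.eigenvalues) - lam • (1 : Matrix (Fin k) (Fin k) ℝ) := by
      rw [smul_one_eq_diagonal, ← diagonal_sub]
      rfl
    have hst := hS.spectral_theorem
    rw [Unitary.conjStarAlgAut_apply] at hst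
    rw [hdiag, mul_sub, sub_mul, ← hst]
    congr 1
    rw [mul_smul_comm, smul_mul_assoc, mul_one,
      Matrix.mem_unitaryGroup_iff.mp hS.eigenvectorUnitary.2]
  rw [key]
  exact (Matrix.PosSemidef.diagonal (fun i => sub_nonneg.mpr (hlam i))).mul_mul_conjTranspose_same _

private lemma trace_quad_ge {k l : ℕ} [Nonempty (Fin k)] (S : Matrix (Fin k) (Fin k) ℝ)
    (hS : S.IsHermitian) (E : Matrix (Fin l) (Fin k) ℝ) :
    (⨅ i, hS.eigenvalues i) * (E * Eᵀ).trace ≤ (E * S * Eᵀ).trace := by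
  set lam := ⨅ i, hS.eigenvalues i with hlamdef
  have hlam : ∀ i, lam ≤ hS.eigenvalues i := fun i => ciInf_le (Finite.bddBelow_range _) i
  have hpsd := (sub_smul_one_posSemidef S hS hlam).mul_mul_conjTranspose_same E
  have hconj : Eᴴ = Eᵀ := by ext i j; simp
  rw [hconj] at hpsd
  have h2 : E * (S - lam • 1) * Eᵀ = E * S * Eᵀ - lam • (E * Eᵀ) := by
    rw [Matrix.mul_sub, Matrix.sub_mul]
    congr 1
    rw [Matrix.mul_smul, Matrix.smul_mul, Matrix.mul_one]
  have h3 := psd_trace_nonneg hpsd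
  rw [h2, Matrix.trace_sub, Matrix.trace_smul, smul_eq_mul] at h3
  linarith

theorem lora_representation_error_lower_bound
    (m n r : ℕ)
    (S : Matrix (Fin m) (Fin m) ℝ) (hS : S.PosDef)
    (W₀ Wstar : Matrix (Fin n) (Fin m) ℝ)
    (α : ℝ) (hα : 0 ≤ α)
    (M₁ M₂ : ℝ) (hM₁ : 0 ≤ M₁) (hM₂ : 0 ≤ M₂)
    (hgap : α * r * Real.sqrt ((m : ℝ) * n * M₁ * M₂)
      < Real.sqrt (∑ i, ∑ j, ((W₀ - Wstar) i j) ^ 2)) :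
    ∀ (A : Matrix (Fin r) (Fin m) ℝ) (B : Matrix (Fin n) (Fin r) ℝ),
      (∑ i, ∑ j, (A i j) ^ 2) ≤ (r : ℝ) * m * M₁ →
      (∑ i, ∑ j, (B i j) ^ 2) ≤ (r : ℝ) * n * M₂ →
      ((W₀ + α • (B * A) - Wstar) * S * (W₀ + α • (B * A) - Wstar)ᵀ).trace
        ≥ (⨅ i, hS.1.eigenvalues i) *
            (Real.sqrt (∑ i, ∑ j, ((W₀ - Wstar) i j) ^ 2)
              - α * r * Real.sqrt ((m : ℝ) * n * M₁ * M₂)) ^ 2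
      ∧ 0 < (⨅ i, hS.1.eigenvalues i) *
            (Real.sqrt (∑ i, ∑ j, ((W₀ - Wstar) i j) ^ 2)
              - α * r * Real.sqrt ((m : ℝ) * n * M₁ * M₂)) ^ 2 := by
  intro A B hA hB
  set c : ℝ := α * r * Real.sqrt ((m : ℝ) * n * M₁ * M₂) with hc_def
  set d : ℝ := Real.sqrt (∑ i, ∑ j, ((W₀ - Wstar) i j) ^ 2) with hd_def
  have hc0 : 0 ≤ c := by positivity
  have hd0 : 0 < d := lt_of_le_of_lt hc0 hgap
  -- m is nonzero
  have hm : Nonempty (Fin m) := by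
    by_contra h
    rw [not_nonempty_iff] at h
    rw [hd_def] at hd0
    simp at hd0
  -- the smallest eigenvalue is positive
  have hlmin : 0 < ⨅ i, hS.1.eigenvalues i := by
    obtain ⟨i, hi⟩ := Finite.exists_min hS.1.eigenvalues
    exact lt_of_lt_of_le (hS.eigenvalues_pos i) (le_ciInf hi)
  set E : Matrix (Fin n) (Fin m) ℝ := W₀ + α • (B * A) - Wstar with hE_def
  -- bound on the perturbation norm
  have hAn : ‖A‖ ≤ Real.sqrt ((r : ℝ) * m * M₁) := by
    rw [frob_eq]; exact Real.sqrt_le_sqrt hA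
  have hBn : ‖B‖ ≤ Real.sqrt ((r : ℝ) * n * M₂) := by
    rw [frob_eq]; exact Real.sqrt_le_sqrt hB
  have hsq : Real.sqrt ((r : ℝ) * n * M₂) * Real.sqrt ((r : ℝ) * m * M₁)
      = (r : ℝ) * Real.sqrt ((m : ℝ) * n * M₁ * M₂) := by
    rw [← Real.sqrt_mul (by positivity)]
    have h : (r : ℝ) * n * M₂ * ((r : ℝ) * m * M₁)
        = (r : ℝ) ^ 2 * ((m : ℝ) * n * M₁ * M₂) := by ring
    rw [h, Real.sqrt_mul (by positivity), Real.sqrt_sq (by positivity)]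
  have hpert : ‖α • (B * A)‖ ≤ c := by
    have h1 : ‖α • (B * A)‖ = α * ‖B * A‖ := by
      rw [norm_smul, Real.norm_eq_abs, abs_of_nonneg hα]
    have h2 : ‖B * A‖ ≤ ‖B‖ * ‖A‖ := Matrix.frobenius_norm_mul B A
    have h3 : ‖B‖ * ‖A‖ ≤ Real.sqrt ((r : ℝ) * n * M₂) * Real.sqrt ((r : ℝ) * m * M₁) :=
      mul_le_mul hBn hAn (norm_nonneg _) (Real.sqrt_nonneg _)
    rw [h1, hc_def]
    calc α * ‖B * A‖ ≤ α * ((r : ℝ) * Real.sqrt ((m : ℝ) * n * M₁ * M₂)) := by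
          rw [← hsq]; exact mul_le_mul_of_nonneg_left (h2.trans h3) hα
      _ = α * r * Real.sqrt ((m : ℝ) * n * M₁ * M₂) := by ring
  -- norm of E bounded below
  have hEeq : E = (W₀ - Wstar) + α • (B * A) := by rw [hE_def]; abel
  have hWd : ‖W₀ - Wstar‖ = d := frob_eq _
  have hEn : d - c ≤ ‖E‖ := by
    have h4 : ‖W₀ - Wstar‖ ≤ ‖E‖ + ‖α • (B * A)‖ := by
      have := norm_add_le E (-(α • (B * A)))
      simpa [hEeq] using this
    rw [hWd] at h4
    linarith
  have hdc0 : 0 < d - c := sub_pos.mpr hgap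
  -- trace(E Eᵀ) = ‖E‖²
  have hEsq : (E * Eᵀ).trace = ‖E‖ ^ 2 := by
    rw [trace_mul_transpose_self', frob_eq, Real.sq_sqrt]
    positivity
  have htr : (⨅ i, hS.1.eigenvalues i) * (E * Eᵀ).trace ≤ (E * S * Eᵀ).trace :=
    trace_quad_ge S hS.1 E
  have hE2 : (d - c) ^ 2 ≤ ‖E‖ ^ 2 := pow_le_pow_left₀ (le_of_lt hdc0) hEn 2
  constructor
  · have : (⨅ i, hS.1.eigenvalues i) * (d - c) ^ 2
        ≤ (⨅ i, hS.1.eigenvalues i) * (E * Eᵀ).trace := by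
      rw [hEsq]
      exact mul_le_mul_of_nonneg_left hE2 (le_of_lt hlmin)
    exact le_trans this htr
  · exact mul_pos hlmin (pow_pos hdc0 2)
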